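/- Let G be a game with oracle distribution μ, let K ∈ ℤ+ and T ∈ ℕ. Fix u ∈ ℕ, distinct salts k_1,…,k_u ∈ [K], possible challenges ch_1,…,ch_u of G, and fixed oracle functions f_j for every j ∈ [K] ∖ {k_1,…,k_u}. Sample f_{k_i} ∼ μ_{ch_i} independently for i ∈ [u]. Let B be a deterministic T-query oracle algorithm taking a (salt, challenge) pair as input and having joint oracle access to (f_1,…,f_K), and run B sequentially (with no shared memory between executions) on inputs (k_1, ch_1), …, (k_u, ch_u). Then Pr[ for every i ∈ [u], the output of B on input (k_i, ch_i) lies in R_{f_{k_i}, ch_i} ] ≤ ∏_{i=1}^u ε_{G_{ch_i}}(T). -/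

import Mathlib

open scoped ENNReal BigOperators

noncomputable section

/-- `{0,1}`-valued indicator of a proposition, in `ℝ≥0∞`. -/
def ind (p : Prop) : ℝ≥0∞ :=
  haveI := Classical.propDecidable p
  if p then 1 else 0

/-- Deterministic oracle algorithms making at most `T` queries, modeled as decision
trees of depth at most `T`: a query is an element `q : Q`, the oracle's answer to `q`
has type `Ans q`, and the final output has type `O`. -/
inductive DT (Q : Type) (Ans : Q → Type) (O : Type) : ℕ → Type
  | ret {T : ℕ} (o : O) : DT Q Ans O T
  | query {T : ℕ} (q : Q) (cont : Ans q → DT Q Ans O T) : DT Q Ans O (T + 1)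

/-- Run a decision tree against an oracle. -/
def DT.run {Q : Type} {Ans : Q → Type} {O : Type} :
    {T : ℕ} → DT Q Ans O T → ((q : Q) → Ans q) → O
  | _, DT.ret o, _ => o
  | _, DT.query q cont, f => DT.run (cont (f q)) f

/-- The number of queries satisfying `p` made along the execution path on oracle `f`. -/
def DT.countP {Q : Type} {Ans : Q → Type} {O : Type} (p : Q → Prop) :
    {T : ℕ} → DT Q Ans O T → ((q : Q) → Ans q) → ℕ
  | _, DT.ret _, _ => 0
  | _, DT.query q cont, f =>
      (haveI := Classical.propDecidable (p q); if p q then 1 else 0)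
        + DT.countP p (cont (f q)) f

/-- A (single-challenge) game: an oracle distribution `μ` over functions
`Fin M → Fin N`, a challenge distribution `π f` for each oracle `f`, and an
accepting outcome set `R f ch` for each oracle and challenge. -/
structure Game where
  M : ℕ
  N : ℕ
  hM : 0 < M
  hN : 0 < N
  Ch : Type
  chFin : Fintype Ch
  Out : Type
  μ : PMF (Fin M → Fin N)
  π : (Fin M → Fin N) → PMF Ch
  R : (Fin M → Fin N) → Ch → Set Out

attribute [instance] Game.chFin

namespace Game

variable (G : Game)

/-- Winning probability of a deterministic `T`-query algorithm (taking the challenge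
as classical input) for the game `G`. -/
def detWinProb {T : ℕ} (a : G.Ch → DT (Fin G.M) (fun _ => Fin G.N) G.Out T) : ℝ≥0∞ :=
  ∑' f : Fin G.M → Fin G.N, G.μ f * ∑' ch : G.Ch, G.π f ch * ind ((a ch).run f ∈ G.R f ch)

/-- Uniform security `ε_G(T)`: the supremum, over randomized `T`-query algorithms
(probability distributions over deterministic ones), of the winning probability. -/
def unifSec (T : ℕ) : ℝ≥0∞ :=
  ⨆ A : PMF (G.Ch → DT (Fin G.M) (fun _ => Fin G.N) G.Out T),
    ∑' a, A a * G.detWinProb a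

/-- Winning probability, in the salted game `G_K`, of a non-uniform algorithm:
a randomized `T`-query algorithm `A` receiving `S` bits of advice together with the
salt and challenge, and an advice function `adv` mapping the joint oracle to `S` bits.
The joint oracle consists of `K` i.i.d. copies `g 0, …, g (K-1)` of the oracle of `G`,
the salt `k` is uniform on `Fin K` and the challenge is drawn from `π (g k)`. -/
def saltedWinProb (K S T : ℕ)
    (A : PMF ((Fin S → Bool) × Fin K × G.Ch →
      DT (Fin K × Fin G.M) (fun _ => Fin G.N) G.Out T))
    (adv : (Fin K → Fin G.M → Fin G.N) → Fin S → Bool) : ℝ≥0∞ :=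
  ∑' g : Fin K → Fin G.M → Fin G.N,
    (∏ k, G.μ (g k)) *
      ((K : ℝ≥0∞)⁻¹ *
        ∑' k : Fin K, ∑' ch : G.Ch, G.π (g k) ch *
          ∑' a, A a *
            ind ((a (adv g, k, ch)).run (fun q => g q.1 q.2) ∈ G.R (g k) ch))

/-- Non-uniform security `ε_{G_K}(S,T)` of the salted game `G_K`: the supremum of the
winning probability over all non-uniform `(S,T)`-algorithms `(A, adv)`. -/
def saltedNonunifSec (K S T : ℕ) : ℝ≥0∞ :=
  ⨆ (A : PMF ((Fin S → Bool) × Fin K × G.Ch →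
      DT (Fin K × Fin G.M) (fun _ => Fin G.N) G.Out T))
    (adv : (Fin K → Fin G.M → Fin G.N) → Fin S → Bool),
    G.saltedWinProb K S T A adv

/-- The marginal probability of a challenge `ch` (for `f ∼ μ`, `ch ∼ π f`). -/
def chProb (ch : G.Ch) : ℝ≥0∞ := ∑' f : Fin G.M → Fin G.N, G.μ f * G.π f ch

/-- The oracle distribution `μ_ch` conditioned on the drawn challenge being `ch`. -/
def condDist (ch : G.Ch) (f : Fin G.M → Fin G.N) : ℝ≥0∞ :=
  G.μ f * G.π f ch / G.chProb ch

/-- Uniform security `ε_{G_ch}(T)` of the challenge-conditioned plain game `G_ch`: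
the supremum over randomized `T`-query algorithms of the probability, for
`f ∼ μ_ch`, that the output lies in `R f ch`. -/
def condSec (ch : G.Ch) (T : ℕ) : ℝ≥0∞ :=
  ⨆ A : PMF (DT (Fin G.M) (fun _ => Fin G.N) G.Out T),
    ∑' a, A a * ∑' f : Fin G.M → Fin G.N, G.condDist ch f * ind (a.run f ∈ G.R f ch)

/-- Uniform security `ε_{G^n}(T')` of the multi-challenge game `G^n`: `n` i.i.d.
challenges are drawn from `π f` and the algorithm must answer all of them. -/
def multiSec (n T' : ℕ) : ℝ≥0∞ :=
  ⨆ A : PMF ((Fin n → G.Ch) → DT (Fin G.M) (fun _ => Fin G.N) (Fin n → G.Out) T'),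
    ∑' a, A a * ∑' f : Fin G.M → Fin G.N, G.μ f *
      ∑' chs : Fin n → G.Ch,
        (∏ j, G.π f (chs j)) * ind (∀ j, (a chs).run f j ∈ G.R f (chs j))

end Game

/-- A plain game: a game without challenges. -/
structure PlainGame where
  M : ℕ
  N : ℕ
  hM : 0 < M
  hN : 0 < N
  Out : Type
  μ : PMF (Fin M → Fin N)
  R : (Fin M → Fin N) → Set Out

namespace PlainGame

/-- Uniform security `ε_G(T)` of a plain game. -/
def unifSec (G : PlainGame) (T : ℕ) : ℝ≥0∞ :=
  ⨆ A : PMF (DT (Fin G.M) (fun _ => Fin G.N) G.Out T),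
    ∑' a, A a * ∑' f : Fin G.M → Fin G.N, G.μ f * ind (a.run f ∈ G.R f)

end PlainGame

/-- Query domain for joint oracle access to the oracles of `k` plain games:
each query is addressed to one of the oracles. -/
abbrev ProdQ {k : ℕ} (Gs : Fin k → PlainGame) : Type := (i : Fin k) × Fin (Gs i).M

/-- Answer type for queries in the direct product. -/
abbrev ProdAns {k : ℕ} (Gs : Fin k → PlainGame) : ProdQ Gs → Type :=
  fun q => Fin (Gs q.1).N

/-- The joint oracle `(f 0, …, f (k-1))` as a single oracle function. -/
def jointOracle {k : ℕ} {Gs : Fin k → PlainGame}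
    (f : (i : Fin k) → Fin (Gs i).M → Fin (Gs i).N) : (q : ProdQ Gs) → ProdAns Gs q :=
  fun q => f q.1 q.2

/-- Winning probability of a `(T 0, …, T (k-1))`-memoryless algorithm, given by
deterministic algorithms `A i` (each making at most `T i` queries and each with
joint oracle access) run sequentially with no shared memory; the oracles are drawn
independently, and the algorithm wins if every output `(A i).run` is accepted. -/
def memorylessWinProb {k : ℕ} (Gs : Fin k → PlainGame) {T : Fin k → ℕ}
    (A : (i : Fin k) → DT (ProdQ Gs) (ProdAns Gs) (Gs i).Out (T i)) : ℝ≥0∞ :=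
  ∑' f : (i : Fin k) → Fin (Gs i).M → Fin (Gs i).N,
    (∏ i, (Gs i).μ (f i)) * ind (∀ i, (A i).run (jointOracle f) ∈ (Gs i).R (f i))

/-- Winning probability of a deterministic algorithm with joint oracle access
outputting a tuple `(e 0, …, e (k-1))` for the direct product game. -/
def jointWinProb {k : ℕ} (Gs : Fin k → PlainGame) {B : ℕ}
    (A : DT (ProdQ Gs) (ProdAns Gs) ((i : Fin k) → (Gs i).Out) B) : ℝ≥0∞ :=
  ∑' f : (i : Fin k) → Fin (Gs i).M → Fin (Gs i).N,
    (∏ i, (Gs i).μ (f i)) * ind (∀ i, A.run (jointOracle f) i ∈ (Gs i).R (f i))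

/-- A deterministic algorithm is `(T 0, …, T (k-1))`-fair if in every execution it
makes at most `T i` queries to the `i`-th oracle. -/
def IsFair {k : ℕ} {Gs : Fin k → PlainGame} {O : Type} {B : ℕ} (T : Fin k → ℕ)
    (A : DT (ProdQ Gs) (ProdAns Gs) O B) : Prop :=
  ∀ (f : (i : Fin k) → Fin (Gs i).M → Fin (Gs i).N) (i : Fin k),
    A.countP (fun q => q.1 = i) (jointOracle f) ≤ T i

end

noncomputable section

namespace SDPT

lemma ind_eq_one {p : Prop} (h : p) : ind p = 1 := by
  simp [ind, h]

lemma ind_eq_zero {p : Prop} (h : ¬ p) : ind p = 0 := by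
  simp [ind, h]

lemma ind_le_one (p : Prop) : ind p ≤ 1 := by
  by_cases h : p
  · simp [ind_eq_one h]
  · simp [ind_eq_zero h]

lemma ind_congr {p q : Prop} (h : p ↔ q) : ind p = ind q := by
  by_cases hp : p
  · rw [ind_eq_one hp, ind_eq_one (h.mp hp)]
  · rw [ind_eq_zero hp, ind_eq_zero (fun hq => hp (h.mpr hq))]

lemma ind_mul_ind_of_imp {p q : Prop} (h : q → p) : ind p * ind q = ind q := by
  by_cases hq : q
  · rw [ind_eq_one hq, ind_eq_one (h hq), one_mul]
  · rw [ind_eq_zero hq, mul_zero]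

lemma ind_forall_eq_prod {α : Type*} [Fintype α] (p : α → Prop) :
    ind (∀ a, p a) = ∏ a, ind (p a) := by
  by_cases h : ∀ a, p a
  · rw [ind_eq_one h]
    rw [Finset.prod_eq_one fun a _ => ind_eq_one (h a)]
  · push_neg at h
    obtain ⟨a, ha⟩ := h
    rw [ind_eq_zero (fun hh => ha (hh a))]
    exact (Finset.prod_eq_zero (Finset.mem_univ a) (ind_eq_zero ha)).symm

/-- Plain (non-depth-indexed) decision trees with query domain `Q`, answers in
`Fin N`, outputs in `Out`. -/
inductive Tr (Q : Type) (N : ℕ) (Out : Type) : Type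
  | ret (o : Out) : Tr Q N Out
  | node (q : Q) (c : Fin N → Tr Q N Out) : Tr Q N Out

namespace Tr

variable {Q : Type} {N : ℕ} {Out : Type}

def run : Tr Q N Out → (Q → Fin N) → Out
  | .ret o, _ => o
  | .node q c, f => (c (f q)).run f

def depth : Tr Q N Out → ℕ
  | .ret _ => 0
  | .node _ c => (Finset.univ.sup fun b => (c b).depth) + 1

def size : Tr Q N Out → ℕ
  | .ret _ => 0
  | .node _ c => (∑ b, (c b).size) + 1

lemma depth_child_le {q : Q} {c : Fin N → Tr Q N Out} (b : Fin N) :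
    (c b).depth ≤ (Tr.node q c).depth - 1 := by
  have : (c b).depth ≤ Finset.univ.sup fun b => (c b).depth :=
    Finset.le_sup (f := fun b => (c b).depth) (Finset.mem_univ b)
  simpa [depth] using this

lemma size_child_lt {q : Q} {c : Fin N → Tr Q N Out} (b : Fin N) :
    (c b).size < (Tr.node q c).size := by
  have : (c b).size ≤ ∑ b, (c b).size :=
    Finset.single_le_sum (f := fun b => (c b).size) (fun _ _ => Nat.zero_le _) (Finset.mem_univ b)
  simp only [size]
  omega

lemma one_le_depth_node {q : Q} {c : Fin N → Tr Q N Out} :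
    1 ≤ (Tr.node q c).depth := by
  simp [depth]

end Tr


-- generic sum-of-sups lemma
lemma sum_iSup_le {α : Type*} [Fintype α] {ι : Type*} [Nonempty ι]
    (f : α → ι → ℝ≥0∞) {V : ℝ≥0∞} (h : ∀ g : α → ι, ∑ a, f a (g a) ≤ V) :
    (∑ a, ⨆ i, f a i) ≤ V := by
  classical
  have key : ∀ s : Finset α, (∑ a ∈ s, ⨆ i, f a i) ≤ ⨆ g : α → ι, ∑ a ∈ s, f a (g a) := by
    intro s
    induction s using Finset.induction_on with
    | empty => simp
    | @insert a s ha ih =>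
      rw [Finset.sum_insert ha]
      have h1 : (∑ x ∈ s, ⨆ i, f x i) ≤ ⨆ g : α → ι, ∑ x ∈ s, f x (g x) := ih
      calc (⨆ i, f a i) + ∑ x ∈ s, ⨆ i, f x i
          ≤ (⨆ i, f a i) + ⨆ g : α → ι, ∑ x ∈ s, f x (g x) := add_le_add le_rfl h1
        _ = ⨆ i, ⨆ g : α → ι, (f a i + ∑ x ∈ s, f x (g x)) := by
            rw [ENNReal.iSup_add]
            exact iSup_congr fun i => ENNReal.add_iSup _
        _ ≤ ⨆ g : α → ι, ∑ x ∈ insert a s, f x (g x) := by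
            refine iSup_le fun i => iSup_le fun g => ?_
            refine le_trans (le_of_eq ?_) (le_iSup _ (Function.update g a i))
            rw [Finset.sum_insert ha, Function.update_self]
            congr 1
            exact Finset.sum_congr rfl fun x hx => by
              rw [Function.update_of_ne (fun hxa => ha (by rwa [hxa] at hx))]
  exact le_trans (key Finset.univ) (iSup_le h)

section Val

variable {M N : ℕ} {Out : Type}

/-- Payoff of a single-oracle tree. -/
def payoff (w : (Fin M → Fin N) → ℝ≥0∞) (R : (Fin M → Fin N) → Set Out)
    (s : Tr (Fin M) N Out) : ℝ≥0∞ :=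
  ∑ x : Fin M → Fin N, w x * ind (s.run x ∈ R x)

/-- Optimal payoff over trees of depth ≤ d. -/
def val (w : (Fin M → Fin N) → ℝ≥0∞) (R : (Fin M → Fin N) → Set Out) (d : ℕ) : ℝ≥0∞ :=
  ⨆ s : {s : Tr (Fin M) N Out // s.depth ≤ d}, payoff w R s.1

lemma payoff_le_val {w : (Fin M → Fin N) → ℝ≥0∞} {R : (Fin M → Fin N) → Set Out}
    {d : ℕ} {s : Tr (Fin M) N Out} (hs : s.depth ≤ d) : payoff w R s ≤ val w R d :=
  le_iSup (fun s : {s : Tr (Fin M) N Out // s.depth ≤ d} => payoff w R s.1) ⟨s, hs⟩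

lemma val_le_mass (w : (Fin M → Fin N) → ℝ≥0∞) (R : (Fin M → Fin N) → Set Out) (d : ℕ) :
    val w R d ≤ ∑ x, w x := by
  refine iSup_le fun s => Finset.sum_le_sum fun x _ => ?_
  calc w x * ind (s.1.run x ∈ R x) ≤ w x * 1 := mul_le_mul_right (ind_le_one _) _
    _ = w x := mul_one _

lemma val_mono {w : (Fin M → Fin N) → ℝ≥0∞} {R : (Fin M → Fin N) → Set Out}
    {d d' : ℕ} (h : d ≤ d') : val w R d ≤ val w R d' :=
  iSup_le fun s => payoff_le_val (le_trans s.2 h)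

lemma val_zero_fun (R : (Fin M → Fin N) → Set Out) (d : ℕ) :
    val (fun _ => (0:ℝ≥0∞)) R d = 0 :=
  le_antisymm (by simpa using val_le_mass (fun _ => 0) R d) (zero_le)

/-- The key budget lemma: summing conditioned values over the answer to one query
costs one query of budget. -/
lemma sum_val_restrict_le [Nonempty Out] (w : (Fin M → Fin N) → ℝ≥0∞)
    (R : (Fin M → Fin N) → Set Out) (d : ℕ) (p : Fin M) :
    (∑ b : Fin N, val (fun x => if x p = b then w x else 0) R d) ≤ val w R (d + 1) := by
  classical
  have hne : Nonempty {s : Tr (Fin M) N Out // s.depth ≤ d} :=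
    ⟨⟨Tr.ret (Classical.arbitrary Out), by simp [Tr.depth]⟩⟩
  refine sum_iSup_le _ fun g => ?_
  -- combined tree
  set s : Tr (Fin M) N Out := Tr.node p (fun b => (g b).1) with hs
  have hdep : s.depth ≤ d + 1 := by
    simp only [hs, Tr.depth]
    exact Nat.add_le_add_right (Finset.sup_le fun b _ => (g b).2) 1
  refine le_trans (le_of_eq ?_) (payoff_le_val hdep)
  simp only [payoff]
  rw [Finset.sum_comm]
  refine Finset.sum_congr rfl fun x _ => ?_
  have : ∀ b : Fin N, (if x p = b then w x else 0) * ind (((g b).1).run x ∈ R x)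
      = if x p = b then w x * ind (((g b).1).run x ∈ R x) else 0 := by
    intro b; split <;> simp
  rw [Finset.sum_congr rfl fun b _ => this b, Finset.sum_ite_eq]
  simp [hs, Tr.run]

end Val

section Sys

set_option linter.unusedSectionVars false

variable {M N K : ℕ} [NeZero N] [NeZero M] {Out : Type}

/-- Restriction of a weight function by the outcome of a probe.
`some p` probes coordinate `p`; `none` is a trivial probe whose answer is always `0`. -/
def restrict (w : (Fin M → Fin N) → ℝ≥0∞) : Option (Fin M) → Fin N → (Fin M → Fin N) → ℝ≥0∞
  | some p, b, x => if x p = b then w x else 0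
  | none, b, x => if b = 0 then w x else 0

/-- A weight function supported on at most one point. -/
def isPt (w : (Fin M → Fin N) → ℝ≥0∞) : Prop := ∃ x₀, ∀ y, y ≠ x₀ → w y = 0

lemma isPt_restrict {w : (Fin M → Fin N) → ℝ≥0∞} (h : isPt w) (pr : Option (Fin M))
    (b : Fin N) : isPt (restrict w pr b) := by
  obtain ⟨x₀, hx₀⟩ := h
  refine ⟨x₀, fun y hy => ?_⟩
  cases pr with
  | some p => by_cases hyp : y p = b <;> simp [restrict, hyp, hx₀ y hy]
  | none => by_cases hb : b = 0 <;> simp [restrict, hb, hx₀ y hy]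

lemma sum_val_restrict_none (w : (Fin M → Fin N) → ℝ≥0∞) (R : (Fin M → Fin N) → Set Out)
    (d : ℕ) : (∑ b : Fin N, val (restrict w none b) R d) = val w R d := by
  classical
  have hz : ∀ b ∈ (Finset.univ : Finset (Fin N)), b ≠ 0 →
      val (restrict w none b) R d = 0 := by
    intro b _ hb
    have : restrict w none b = fun _ => (0:ℝ≥0∞) := funext fun x => if_neg hb
    rw [this, val_zero_fun]
  rw [Finset.sum_eq_single (0 : Fin N) hz (by simp)]
  have h0 : restrict w none (0:Fin N) = w := funext fun x => by simp [restrict]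
  rw [h0]

lemma sum_val_restrict_some_of_isPt {w : (Fin M → Fin N) → ℝ≥0∞} (h : isPt w)
    (R : (Fin M → Fin N) → Set Out) (d : ℕ) (p : Fin M) :
    (∑ b : Fin N, val (restrict w (some p) b) R d) ≤ val w R d := by
  classical
  obtain ⟨x₀, hx₀⟩ := h
  have hz : ∀ b ∈ (Finset.univ : Finset (Fin N)), b ≠ x₀ p →
      val (restrict w (some p) b) R d = 0 := by
    intro b _ hb
    have : restrict w (some p) b = fun _ => (0:ℝ≥0∞) := by
      funext y
      by_cases hy : y = x₀
      · subst hy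
        exact if_neg fun hc => hb hc.symm
      · simp only [restrict, hx₀ y hy]
        split <;> rfl
    rw [this, val_zero_fun]
  rw [Finset.sum_eq_single (x₀ p) hz (by simp)]
  have h0 : restrict w (some p) (x₀ p) = w := by
    funext y
    by_cases hy : y = x₀
    · subst hy; simp [restrict]
    · simp only [restrict, hx₀ y hy]
      split <;> rfl
  rw [h0]

/-- The joint system: `K` independent oracles with weights `w k`, trees `t k` with
joint oracle access, acceptance sets `R k`. -/
def sys (w : Fin K → (Fin M → Fin N) → ℝ≥0∞) (R : Fin K → (Fin M → Fin N) → Set Out)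
    (t : Fin K → Tr (Fin K × Fin M) N Out) : ℝ≥0∞ :=
  ∑ H : Fin K → Fin M → Fin N,
    (∏ k, w k (H k)) * ind (∀ k, (t k).run (fun q => H q.1 q.2) ∈ R k (H k))

/-- The canonical probe-answer tuple of a joint oracle `H`. -/
def astar (pr : Fin K → Option (Fin M)) (H : Fin K → Fin M → Fin N) (j : Fin K) : Fin N :=
  match pr j with
  | some p => H j p
  | none => 0

/-- Step a tree one level down using the answers `a`. -/
def stepa (a : Fin K → Fin N) : Tr (Fin K × Fin M) N Out → Tr (Fin K × Fin M) N Out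
  | .ret o => .ret o
  | .node q c => c (a q.1)

lemma restrict_astar (w : (Fin M → Fin N) → ℝ≥0∞) (pr : Fin K → Option (Fin M))
    (H : Fin K → Fin M → Fin N) (j : Fin K) :
    restrict w (pr j) (astar pr H j) (H j) = w (H j) := by
  cases h : pr j <;> simp [restrict, astar, h]

lemma restrict_ne_astar (w : (Fin M → Fin N) → ℝ≥0∞) (pr : Fin K → Option (Fin M))
    (H : Fin K → Fin M → Fin N) (j : Fin K) {a : Fin N} (ha : a ≠ astar pr H j) :
    restrict w (pr j) a (H j) = 0 := by
  cases h : pr j with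
  | some p =>
    simp only [astar, h] at ha
    exact if_neg fun hh => ha hh.symm
  | none =>
    simp only [astar, h] at ha
    exact if_neg ha

lemma run_stepa_astar {t : Tr (Fin K × Fin M) N Out} {q : Fin K × Fin M}
    {cont : Fin N → Tr (Fin K × Fin M) N Out} (ht : t = Tr.node q cont)
    {pr : Fin K → Option (Fin M)} (hpr : pr q.1 = some q.2) (H : Fin K → Fin M → Fin N) :
    (stepa (astar pr H) t).run (fun q' => H q'.1 q'.2)
      = t.run (fun q' => H q'.1 q'.2) := by
  subst ht
  simp [stepa, Tr.run, astar, hpr]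

/-- The one-shot peel identity. -/
lemma peel_eq (w : Fin K → (Fin M → Fin N) → ℝ≥0∞) (R : Fin K → (Fin M → Fin N) → Set Out)
    (t : Fin K → Tr (Fin K × Fin M) N Out) (C : Finset (Fin K))
    (pr : Fin K → Option (Fin M))
    (H1 : ∀ c ∈ C, ∃ q cont, t c = Tr.node q cont ∧ pr q.1 = some q.2) :
    sys w R t = ∑ a : Fin K → Fin N,
      sys (fun k => restrict (w k) (pr k) (a k)) R
        (fun k => if k ∈ C then stepa a (t k) else t k) := by
  classical
  simp only [sys]
  rw [Finset.sum_comm]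
  refine Finset.sum_congr rfl fun H _ => ?_
  rw [Finset.sum_eq_single (astar pr H)]
  · have h1 : (∏ k, restrict (w k) (pr k) (astar pr H k) (H k)) = ∏ k, w k (H k) :=
      Finset.prod_congr rfl fun k _ => restrict_astar (w k) pr H k
    have h2 : ind (∀ k, ((if k ∈ C then stepa (astar pr H) (t k) else t k).run
          (fun q => H q.1 q.2)) ∈ R k (H k))
        = ind (∀ k, (t k).run (fun q => H q.1 q.2) ∈ R k (H k)) := by
      refine ind_congr (forall_congr' fun k => ?_)
      by_cases hk : k ∈ C
      · obtain ⟨q, cont, htk, hprk⟩ := H1 k hk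
        rw [if_pos hk, run_stepa_astar htk hprk H]
      · rw [if_neg hk]
    rw [h1, h2]
  · intro a _ ha
    obtain ⟨j, hj⟩ := Function.ne_iff.mp ha
    rw [Finset.prod_eq_zero (Finset.mem_univ j) (restrict_ne_astar (w j) pr H j hj),
      zero_mul]
  · intro h
    exact absurd (Finset.mem_univ _) h

open Classical in
/-- Number of coordinates whose weight is not a point mass. -/
def NPcard (w : Fin K → (Fin M → Fin N) → ℝ≥0∞) : ℕ :=
  (Finset.univ.filter fun k => ¬ isPt (w k)).card

lemma NPcard_le_of_imp {w w' : Fin K → (Fin M → Fin N) → ℝ≥0∞}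
    (h : ∀ k, isPt (w k) → isPt (w' k)) : NPcard w' ≤ NPcard w := by
  classical
  refine Finset.card_le_card fun k hk => ?_
  rw [Finset.mem_filter] at hk ⊢
  exact ⟨hk.1, fun hpt => hk.2 (h k hpt)⟩

theorem sys_le [Nonempty Out] :
    ∀ (n m : ℕ) (w : Fin K → (Fin M → Fin N) → ℝ≥0∞)
      (R : Fin K → (Fin M → Fin N) → Set Out) (d : Fin K → ℕ)
      (t : Fin K → Tr (Fin K × Fin M) N Out),
      NPcard w ≤ n → (∑ k, (t k).size) ≤ m → (∀ k, (t k).depth ≤ d k) →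
      sys w R t ≤ ∏ k, val (w k) (R k) (d k) := by
  intro n
  induction n using Nat.strong_induction_on with
  | _ n ihn =>
  intro m
  induction m using Nat.strong_induction_on with
  | _ m ihm =>
  intro w R d t hNP hsz hdep
  classical
  -- The generic one-step peel.
  have peelstep : ∀ (C : Finset (Fin K)) (pr : Fin K → Option (Fin M)), C.Nonempty →
      (∀ c ∈ C, ∃ q cont, t c = Tr.node q cont ∧ pr q.1 = some q.2) →
      (∀ j, (∑ b, val (restrict (w j) (pr j) b) (R j) (if j ∈ C then d j - 1 else d j))
          ≤ val (w j) (R j) (d j)) →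
      sys w R t ≤ ∏ k, val (w k) (R k) (d k) := by
    intro C pr hC H1 H2
    rw [peel_eq w R t C pr H1]
    have hstep : ∀ a : Fin K → Fin N,
        sys (fun k => restrict (w k) (pr k) (a k)) R
            (fun k => if k ∈ C then stepa a (t k) else t k)
          ≤ ∏ k, val (restrict (w k) (pr k) (a k)) (R k)
              (if k ∈ C then d k - 1 else d k) := by
      intro a
      have hszC : ∀ k ∈ C, (stepa a (t k)).size < (t k).size := by
        intro k hk
        obtain ⟨q, cont, htk, -⟩ := H1 k hk
        rw [htk]
        exact Tr.size_child_lt _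
      have hsize : (∑ k, (if k ∈ C then stepa a (t k) else t k).size)
          < ∑ k, (t k).size := by
        obtain ⟨c₀, hc₀⟩ := hC
        refine Finset.sum_lt_sum (fun k _ => ?_) ⟨c₀, Finset.mem_univ c₀, ?_⟩
        · by_cases hk : k ∈ C
          · rw [if_pos hk]; exact le_of_lt (hszC k hk)
          · rw [if_neg hk]
        · rw [if_pos hc₀]; exact hszC c₀ hc₀
      have hNP' : NPcard (fun k => restrict (w k) (pr k) (a k)) ≤ n :=
        le_trans (NPcard_le_of_imp fun k hpt => isPt_restrict hpt (pr k) (a k)) hNP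
      have hdep' : ∀ k, (if k ∈ C then stepa a (t k) else t k).depth
          ≤ (if k ∈ C then d k - 1 else d k) := by
        intro k
        by_cases hk : k ∈ C
        · rw [if_pos hk, if_pos hk]
          obtain ⟨q, cont, htk, -⟩ := H1 k hk
          have hd : (Tr.node q cont).depth ≤ d k := by rw [← htk]; exact hdep k
          rw [htk]
          exact le_trans (Tr.depth_child_le _) (Nat.sub_le_sub_right hd 1)
        · rw [if_neg hk, if_neg hk]; exact hdep k
      exact ihm _ (lt_of_lt_of_le hsize hsz) _ R _ _ hNP' le_rfl hdep'
    calc (∑ a : Fin K → Fin N, sys (fun k => restrict (w k) (pr k) (a k)) R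
            (fun k => if k ∈ C then stepa a (t k) else t k))
        ≤ ∑ a : Fin K → Fin N, ∏ k, val (restrict (w k) (pr k) (a k)) (R k)
            (if k ∈ C then d k - 1 else d k) := Finset.sum_le_sum fun a _ => hstep a
      _ = ∏ k, ∑ b, val (restrict (w k) (pr k) b) (R k)
            (if k ∈ C then d k - 1 else d k) :=
          (Fintype.prod_sum fun k b => val (restrict (w k) (pr k) b) (R k)
            (if k ∈ C then d k - 1 else d k)).symm
      _ ≤ ∏ k, val (w k) (R k) (d k) := Finset.prod_le_prod' fun k _ => H2 k
  by_cases hretnp : ∃ k₀, (∃ o, t k₀ = Tr.ret o) ∧ ¬ isPt (w k₀)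
  · -- peel a `ret` instance with non-point weight
    obtain ⟨k₀, ⟨o, hto⟩, hnp⟩ := hretnp
    set pw : (Fin M → Fin N) → (Fin M → Fin N) → ℝ≥0∞ :=
      fun x y => if y = x then w k₀ y * ind (o ∈ R k₀ y) else 0 with hpw
    have habs : ∀ H : Fin K → Fin M → Fin N,
        ind (o ∈ R k₀ (H k₀))
          * ind (∀ k, (t k).run (fun q => H q.1 q.2) ∈ R k (H k))
        = ind (∀ k, (t k).run (fun q => H q.1 q.2) ∈ R k (H k)) := by
      intro H
      refine ind_mul_ind_of_imp fun hΦ => ?_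
      have h := hΦ k₀
      rw [hto] at h
      exact h
    have hdecomp : sys w R t
        = ∑ x : Fin M → Fin N, sys (Function.update w k₀ (pw x)) R t := by
      simp only [sys]
      rw [Finset.sum_comm]
      refine Finset.sum_congr rfl fun H _ => ?_
      have hupd : ∀ x : Fin M → Fin N, (∏ k, Function.update w k₀ (pw x) k (H k))
          = pw x (H k₀) * ∏ k ∈ Finset.univ.erase k₀, w k (H k) := by
        intro x
        rw [← Finset.mul_prod_erase Finset.univ
          (fun k => Function.update w k₀ (pw x) k (H k)) (Finset.mem_univ k₀)]
        congr 1
        · rw [Function.update_self]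
        · exact Finset.prod_congr rfl fun k hk => by
            rw [Function.update_of_ne (Finset.mem_erase.mp hk).1]
      have hsum : (∑ x : Fin M → Fin N, pw x (H k₀))
          = w k₀ (H k₀) * ind (o ∈ R k₀ (H k₀)) := by
        simp only [hpw]
        rw [Finset.sum_ite_eq]
        simp
      symm
      calc ∑ x : Fin M → Fin N, (∏ k, Function.update w k₀ (pw x) k (H k))
              * ind (∀ k, (t k).run (fun q => H q.1 q.2) ∈ R k (H k))
          = ∑ x : Fin M → Fin N, pw x (H k₀) * ((∏ k ∈ Finset.univ.erase k₀, w k (H k))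
              * ind (∀ k, (t k).run (fun q => H q.1 q.2) ∈ R k (H k))) := by
            refine Finset.sum_congr rfl fun x _ => ?_
            rw [hupd x, mul_assoc]
        _ = (∑ x : Fin M → Fin N, pw x (H k₀)) * ((∏ k ∈ Finset.univ.erase k₀, w k (H k))
              * ind (∀ k, (t k).run (fun q => H q.1 q.2) ∈ R k (H k))) := by
            rw [← Finset.sum_mul]
        _ = (w k₀ (H k₀) * ∏ k ∈ Finset.univ.erase k₀, w k (H k))
              * (ind (o ∈ R k₀ (H k₀))
                 * ind (∀ k, (t k).run (fun q => H q.1 q.2) ∈ R k (H k))) := by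
            rw [hsum]; ring
        _ = (∏ k, w k (H k))
              * ind (∀ k, (t k).run (fun q => H q.1 q.2) ∈ R k (H k)) := by
            rw [habs H, ← Finset.mul_prod_erase Finset.univ
              (fun k => w k (H k)) (Finset.mem_univ k₀)]
    rw [hdecomp]
    have hbound : ∀ x : Fin M → Fin N, sys (Function.update w k₀ (pw x)) R t
        ≤ val (pw x) (R k₀) (d k₀)
          * ∏ k ∈ Finset.univ.erase k₀, val (w k) (R k) (d k) := by
      intro x
      have hpt : isPt (pw x) := ⟨x, fun y hy => if_neg hy⟩
      have hlt : NPcard (Function.update w k₀ (pw x)) < NPcard w := by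
        refine lt_of_le_of_lt (Finset.card_le_card ?_)
          (Finset.card_erase_lt_of_mem (Finset.mem_filter.mpr ⟨Finset.mem_univ _, hnp⟩))
        intro k hk
        rw [Finset.mem_filter] at hk
        by_cases hkk : k = k₀
        · exfalso
          apply hk.2
          subst hkk
          rw [Function.update_self]
          exact hpt
        · refine Finset.mem_erase.mpr ⟨hkk, Finset.mem_filter.mpr ⟨Finset.mem_univ _, ?_⟩⟩
          have h2 := hk.2
          rwa [Function.update_of_ne hkk] at h2
      have h1 := ihn _ (lt_of_lt_of_le hlt hNP) (∑ k, (t k).size)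
        (Function.update w k₀ (pw x)) R d t le_rfl le_rfl hdep
      refine le_trans h1 (le_of_eq ?_)
      rw [← Finset.mul_prod_erase Finset.univ
        (fun k => val (Function.update w k₀ (pw x) k) (R k) (d k)) (Finset.mem_univ k₀)]
      congr 1
      · rw [Function.update_self]
      · exact Finset.prod_congr rfl fun k hk => by
          rw [Function.update_of_ne (Finset.mem_erase.mp hk).1]
    have hfin : (∑ x : Fin M → Fin N, val (pw x) (R k₀) (d k₀))
        ≤ val (w k₀) (R k₀) (d k₀) := by
      have hb : ∀ x : Fin M → Fin N, val (pw x) (R k₀) (d k₀)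
          ≤ w k₀ x * ind (o ∈ R k₀ x) := by
        intro x
        refine le_trans (val_le_mass _ _ _) (le_of_eq ?_)
        simp only [hpw]
        rw [Finset.sum_ite_eq']
        simp
      refine le_trans (Finset.sum_le_sum fun x _ => hb x) ?_
      have hpay : payoff (w k₀) (R k₀) (Tr.ret o)
          = ∑ x : Fin M → Fin N, w k₀ x * ind (o ∈ R k₀ x) := by
        simp [payoff, Tr.run]
      rw [← hpay]
      exact payoff_le_val (by simp [Tr.depth])
    calc (∑ x : Fin M → Fin N, sys (Function.update w k₀ (pw x)) R t)
        ≤ ∑ x : Fin M → Fin N, val (pw x) (R k₀) (d k₀)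
            * ∏ k ∈ Finset.univ.erase k₀, val (w k) (R k) (d k) :=
          Finset.sum_le_sum fun x _ => hbound x
      _ = (∑ x : Fin M → Fin N, val (pw x) (R k₀) (d k₀))
            * ∏ k ∈ Finset.univ.erase k₀, val (w k) (R k) (d k) := by
          rw [← Finset.sum_mul]
      _ ≤ val (w k₀) (R k₀) (d k₀)
            * ∏ k ∈ Finset.univ.erase k₀, val (w k) (R k) (d k) :=
          mul_le_mul_left hfin _
      _ = ∏ k, val (w k) (R k) (d k) :=
          Finset.mul_prod_erase Finset.univ
            (fun k => val (w k) (R k) (d k)) (Finset.mem_univ k₀)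
  · push_neg at hretnp
    by_cases hnode : ∃ k q c, t k = Tr.node q c
    · -- there is a node; find an exit edge or a cycle in the root-query graph
      set A : Finset (Fin K) := Finset.univ.filter (fun k => ∃ q c, t k = Tr.node q c)
        with hA
      obtain ⟨k₁, q₁, c₁, hk₁⟩ := hnode
      have hAne : A.Nonempty :=
        ⟨k₁, Finset.mem_filter.mpr ⟨Finset.mem_univ _, q₁, c₁, hk₁⟩⟩
      obtain ⟨σ, π2, cnt, hnodek⟩ : ∃ (σ : Fin K → Fin K) (π2 : Fin K → Fin M)
          (cnt : Fin K → Fin N → Tr (Fin K × Fin M) N Out),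
          ∀ k ∈ A, t k = Tr.node (σ k, π2 k) (cnt k) := by
        refine ⟨fun k => if h : ∃ q c, t k = Tr.node q c then h.choose.1 else k,
                fun k => if h : ∃ q c, t k = Tr.node q c then h.choose.2 else 0,
                fun k => if h : ∃ q c, t k = Tr.node q c then h.choose_spec.choose
                  else fun _ => t k, ?_⟩
        intro k hk
        have h := (Finset.mem_filter.mp hk).2
        simp only [dif_pos h]
        rw [Prod.mk.eta]
        exact h.choose_spec.choose_spec
      have hretpt : ∀ j, j ∉ A → isPt (w j) := by
        intro j hj
        refine hretnp j ?_
        cases hs : t j with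
        | ret o => exact ⟨o, rfl⟩
        | node q c =>
          exact absurd (Finset.mem_filter.mpr ⟨Finset.mem_univ _, q, c, hs⟩) hj
      have hd1 : ∀ j ∈ A, 1 ≤ d j := by
        intro j hj
        have h := hdep j
        rw [hnodek j hj] at h
        exact le_trans Tr.one_le_depth_node h
      by_cases hexit : ∃ k ∈ A, σ k ∉ A
      · -- exit edge: the queried instance is a point mass
        obtain ⟨k, hkA, hσA⟩ := hexit
        have hσne : σ k ≠ k := fun h => hσA (by rwa [h])
        have hpt : isPt (w (σ k)) := hretpt _ hσA
        refine peelstep {k} (fun j => if j = σ k then some (π2 k) else none)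
          ⟨k, Finset.mem_singleton_self k⟩ ?_ ?_
        · intro c hc
          rw [Finset.mem_singleton] at hc
          subst hc
          exact ⟨(σ c, π2 c), cnt c, hnodek c hkA, by simp⟩
        · intro j
          by_cases hj : j = σ k
          · subst hj
            rw [if_pos rfl, if_neg (by simpa using hσne)]
            exact sum_val_restrict_some_of_isPt hpt _ _ _
          · rw [if_neg hj]
            by_cases hjk : j ∈ ({k} : Finset (Fin K))
            · rw [if_pos hjk, sum_val_restrict_none]
              exact val_mono (Nat.sub_le _ 1)
            · rw [if_neg hjk, sum_val_restrict_none]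
      · -- no exit edge: find a cycle
        push_neg at hexit
        obtain ⟨a₀, ha₀⟩ := hAne
        have hiter : ∀ r : ℕ, σ^[r] a₀ ∈ A := by
          intro r
          induction r with
          | zero => simpa using ha₀
          | succ r ih =>
            rw [Function.iterate_succ_apply']
            exact hexit _ ih
        obtain ⟨i0, j0, hne0, heq0⟩ :=
          Finite.exists_ne_map_eq_of_infinite (fun r : ℕ => σ^[r] a₀)
        obtain ⟨i, j, hij, heq⟩ : ∃ i j : ℕ, i < j ∧ σ^[i] a₀ = σ^[j] a₀ := by
          rcases hne0.lt_or_gt with h | h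
          exacts [⟨i0, j0, h, heq0⟩, ⟨j0, i0, h, heq0.symm⟩]
        set per := j - i with hperdef
        have hper0 : 0 < per := by omega
        set b0 := σ^[i] a₀ with hb0def
        have hb0 : σ^[per] b0 = b0 := by
          rw [hb0def, ← Function.iterate_add_apply]
          have hpi : per + i = j := by omega
          rw [hpi, ← heq]
        set C := (Finset.range per).image (fun r => σ^[r] b0) with hCdef
        have hCmem : ∀ r : ℕ, σ^[r] b0 ∈ C := by
          intro r
          have hdiv : σ^[r] b0 = σ^[r % per] b0 := by
            conv_lhs => rw [← Nat.mod_add_div r per]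
            rw [Function.iterate_add_apply]
            congr 1
            rw [Function.iterate_mul]
            exact Function.iterate_fixed hb0 _
          rw [hdiv]
          exact Finset.mem_image.mpr
            ⟨r % per, Finset.mem_range.mpr (Nat.mod_lt _ hper0), rfl⟩
        have hCA : ∀ c ∈ C, c ∈ A := by
          intro c hc
          obtain ⟨r, -, rfl⟩ := Finset.mem_image.mp hc
          rw [hb0def, ← Function.iterate_add_apply]
          exact hiter _
        have hσC : ∀ c ∈ C, σ c ∈ C := by
          intro c hc
          obtain ⟨r, -, rfl⟩ := Finset.mem_image.mp hc
          rw [← Function.iterate_succ_apply' σ r b0]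
          exact hCmem _
        have hinjC : ∀ c ∈ C, ∀ c' ∈ C, σ c = σ c' → c = c' := by
          have hL : ∀ c ∈ C, σ^[per - 1] (σ c) = c := by
            intro c hc
            obtain ⟨r, -, rfl⟩ := Finset.mem_image.mp hc
            rw [← Function.iterate_succ_apply' σ r b0,
              ← Function.iterate_add_apply σ (per - 1) (r + 1) b0]
            have he : per - 1 + (r + 1) = r + per := by omega
            rw [he, Function.iterate_add_apply σ r per b0, hb0]
          intro c hc c' hc' hcc
          rw [← hL c hc, ← hL c' hc', hcc]
        set pr : Fin K → Option (Fin M) := fun j' =>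
          if h : ∃ c ∈ C, σ c = j' then some (π2 h.choose) else none with hprdef
        have hprσ : ∀ c ∈ C, pr (σ c) = some (π2 c) := by
          intro c hc
          have hex : ∃ c' ∈ C, σ c' = σ c := ⟨c, hc, rfl⟩
          simp only [hprdef]
          rw [dif_pos hex]
          have he : hex.choose = c := hinjC _ hex.choose_spec.1 _ hc hex.choose_spec.2
          rw [he]
        have hprnone : ∀ j', j' ∉ C → pr j' = none := by
          intro j' hj'
          simp only [hprdef]
          rw [dif_neg]
          rintro ⟨c, hc, rfl⟩
          exact hj' (hσC c hc)
        refine peelstep C pr ⟨b0, by simpa using hCmem 0⟩ ?_ ?_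
        · intro c hc
          exact ⟨(σ c, π2 c), cnt c, hnodek c (hCA c hc), hprσ c hc⟩
        · intro j'
          by_cases hj' : j' ∈ C
          · rw [if_pos hj']
            cases hpr : pr j' with
            | none =>
              rw [sum_val_restrict_none]
              exact val_mono (Nat.sub_le _ 1)
            | some p =>
              calc (∑ b, val (restrict (w j') (some p) b) (R j') (d j' - 1))
                  ≤ val (w j') (R j') (d j' - 1 + 1) := sum_val_restrict_le _ _ _ p
                _ = val (w j') (R j') (d j') := by
                    rw [Nat.sub_add_cancel (hd1 j' (hCA j' hj'))]
          · rw [if_neg hj', hprnone j' hj', sum_val_restrict_none]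
    · -- all trees are `ret`
      have hall : ∀ k, ∃ ok, t k = Tr.ret ok := by
        intro k
        cases htk : t k with
        | ret o => exact ⟨o, rfl⟩
        | node q c => exact absurd ⟨k, q, c, htk⟩ hnode
      choose ov hov using hall
      have heq : sys w R t = ∏ k, ∑ x : Fin M → Fin N, w k x * ind (ov k ∈ R k x) := by
        simp only [sys]
        have hterm : ∀ H : Fin K → Fin M → Fin N,
            (∏ k, w k (H k)) * ind (∀ k, (t k).run (fun q => H q.1 q.2) ∈ R k (H k))
            = ∏ k, (w k (H k) * ind (ov k ∈ R k (H k))) := by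
          intro H
          rw [Finset.prod_mul_distrib]
          congr 1
          rw [ind_forall_eq_prod]
          refine Finset.prod_congr rfl fun k _ => ind_congr ?_
          rw [hov k]
          simp [Tr.run]
        rw [Finset.sum_congr rfl fun H _ => hterm H]
        exact (Fintype.prod_sum fun k x => w k x * ind (ov k ∈ R k x)).symm
      rw [heq]
      refine Finset.prod_le_prod' fun k _ => ?_
      have hpay : payoff (w k) (R k) (Tr.ret (ov k))
          = ∑ x : Fin M → Fin N, w k x * ind (ov k ∈ R k x) := by
        simp [payoff, Tr.run]
      rw [← hpay]
      exact payoff_le_val (by simp [Tr.depth])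

end Sys


/-- Extract some output from a (nonempty-answer) `DT`. -/
def dtSomeOut {Q : Type} {N : ℕ} [NeZero N] {O : Type} :
    ∀ {T : ℕ}, DT Q (fun _ => Fin N) O T → O
  | _, .ret o => o
  | _, .query _ cont => dtSomeOut (cont 0)

/-- Convert a `DT` into a plain tree. -/
def toTr {Q : Type} {N : ℕ} {O : Type} :
    ∀ {T : ℕ}, DT Q (fun _ => Fin N) O T → Tr Q N O
  | _, .ret o => .ret o
  | _, .query q cont => .node q (fun b => toTr (cont b))

lemma toTr_depth {Q : Type} {N : ℕ} {O : Type} :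
    ∀ {T : ℕ} (dt : DT Q (fun _ => Fin N) O T), (toTr dt).depth ≤ T
  | _, .ret _ => Nat.zero_le _
  | _, .query q cont => by
      simp only [toTr, Tr.depth]
      exact Nat.add_le_add_right (Finset.sup_le fun b _ => toTr_depth (cont b)) 1

lemma toTr_run {Q : Type} {N : ℕ} {O : Type} :
    ∀ {T : ℕ} (dt : DT Q (fun _ => Fin N) O T) (f : Q → Fin N),
      (toTr dt).run f = dt.run f
  | _, .ret _, _ => rfl
  | _, .query q cont, f => toTr_run (cont (f q)) f

/-- Convert a plain tree of depth ≤ d into a `DT` with depth budget `d`. -/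
def toDT {M N : ℕ} {O : Type} :
    ∀ (s : Tr (Fin M) N O) (d : ℕ), s.depth ≤ d → DT (Fin M) (fun _ => Fin N) O d
  | .ret o, _, _ => .ret o
  | .node _ c, 0, h => by simp [Tr.depth] at h
  | .node q c, d + 1, h => .query q (fun b => toDT (c b) d
      (le_trans (Tr.depth_child_le b) (Nat.sub_le_sub_right h 1)))

lemma toDT_run {M N : ℕ} {O : Type} :
    ∀ (s : Tr (Fin M) N O) (d : ℕ) (h : s.depth ≤ d) (f : Fin M → Fin N),
      (toDT s d h).run f = s.run f
  | .ret _, _, _, _ => rfl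
  | .node _ c, 0, h, _ => by simp [Tr.depth] at h
  | .node q c, d + 1, h, f => toDT_run (c (f q)) d _ f

/-- The single-instance value is bounded by the conditional security. -/
lemma val_le_condSec (G : Game) [NeZero G.N] (ch : G.Ch) (T : ℕ) :
    val (G.condDist ch) (fun f => G.R f ch) T ≤ G.condSec ch T := by
  refine iSup_le fun s => ?_
  set dt := toDT s.1 T s.2 with hdt
  have hpay : payoff (G.condDist ch) (fun f => G.R f ch) s.1
      = ∑' a : DT (Fin G.M) (fun _ => Fin G.N) G.Out T,
          (PMF.pure dt) a * ∑' f : Fin G.M → Fin G.N,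
            G.condDist ch f * ind (a.run f ∈ G.R f ch) := by
    rw [tsum_eq_single dt ?_]
    · rw [PMF.pure_apply, if_pos rfl, one_mul, tsum_fintype]
      refine Finset.sum_congr rfl fun f _ => ?_
      rw [hdt, toDT_run]
    · intro b hb
      rw [PMF.pure_apply, if_neg hb, zero_mul]
  rw [Game.condSec]
  exact le_trans (le_of_eq hpay)
    (le_iSup (fun A : PMF (DT (Fin G.M) (fun _ => Fin G.N) G.Out T) =>
      ∑' a, A a * ∑' f : Fin G.M → Fin G.N,
        G.condDist ch f * ind (a.run f ∈ G.R f ch)) (PMF.pure dt))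


end SDPT

end

/-- Fix `u` distinct salts `ks 0, …, ks (u-1)` with possible
challenges `chs i`, fixed oracles `f0 j` for all remaining salts, and sample
`f (ks i) ∼ μ_{chs i}` independently. Running a deterministic `T`-query algorithm
`B` (with joint oracle access) sequentially on the inputs `(ks i, chs i)`, the
probability that every output is accepted is at most `∏ i, ε_{G_{chs i}}(T)`. -/
theorem cond_memoryless_sdpt (G : Game) (K : ℕ) (hK : 0 < K) (T u : ℕ)
    (ks : Fin u → Fin K) (hks : Function.Injective ks)
    (chs : Fin u → G.Ch) (hchs : ∀ i, G.chProb (chs i) ≠ 0)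
    (f0 : Fin K → Fin G.M → Fin G.N)
    (B : Fin K × G.Ch → DT (Fin K × Fin G.M) (fun _ => Fin G.N) G.Out T) :
    (∑' h : Fin u → Fin G.M → Fin G.N,
        (∏ i, G.condDist (chs i) (h i)) *
          ind (∀ i, (B (ks i, chs i)).run
              (fun q => (if hj : ∃ i', ks i' = q.1 then h hj.choose else f0 q.1) q.2)
            ∈ G.R (h i) (chs i)))
      ≤ ∏ i, G.condSec (chs i) T := by
  haveI : NeZero G.N := ⟨G.hN.ne'⟩
  haveI : NeZero G.M := ⟨G.hM.ne'⟩
  rw [tsum_fintype]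
  rcases Nat.eq_zero_or_pos u with hu | hu
  · subst hu
    rw [Fintype.sum_unique]
    simp only [Finset.univ_eq_empty, Finset.prod_empty, one_mul]
    exact SDPT.ind_le_one _
  · haveI hOut : Nonempty G.Out := ⟨SDPT.dtSomeOut (B (ks ⟨0, hu⟩, chs ⟨0, hu⟩))⟩
    classical
    set e : (Fin u → Fin G.M → Fin G.N) → (Fin K → Fin G.M → Fin G.N) := fun h k =>
      if hj : ∃ i', ks i' = k then h hj.choose else f0 k with he
    set w : Fin K → (Fin G.M → Fin G.N) → ℝ≥0∞ := fun k =>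
      if hj : ∃ i', ks i' = k then G.condDist (chs hj.choose)
      else fun x => if x = f0 k then 1 else 0 with hw
    set Rs : Fin K → (Fin G.M → Fin G.N) → Set G.Out := fun k x =>
      if hj : ∃ i', ks i' = k then G.R x (chs hj.choose) else Set.univ with hRs
    set ts : Fin K → SDPT.Tr (Fin K × Fin G.M) G.N G.Out := fun k =>
      if hj : ∃ i', ks i' = k then SDPT.toTr (B (k, chs hj.choose))
      else SDPT.Tr.ret (Classical.arbitrary G.Out) with hts
    have hchoose : ∀ (i : Fin u) (hj : ∃ i', ks i' = ks i), hj.choose = i :=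
      fun i hj => hks hj.choose_spec
    have hsys : SDPT.sys w Rs ts
        = ∑ h : Fin u → Fin G.M → Fin G.N,
            (∏ i, G.condDist (chs i) (h i)) *
              ind (∀ i, (B (ks i, chs i)).run
                  (fun q => (if hj : ∃ i', ks i' = q.1 then h hj.choose else f0 q.1) q.2)
                ∈ G.R (h i) (chs i)) := by
      have hvanish : ∀ H : Fin K → Fin G.M → Fin G.N, H ∉ Finset.univ.image e →
          (∏ k, w k (H k))
            * ind (∀ k, (ts k).run (fun q => H q.1 q.2) ∈ Rs k (H k)) = 0 := by
        intro H hH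
        have hne : ∃ k, (¬ ∃ i', ks i' = k) ∧ H k ≠ f0 k := by
          by_contra hcon
          push_neg at hcon
          refine hH (Finset.mem_image.mpr
            ⟨fun i => H (ks i), Finset.mem_univ _, funext fun k => ?_⟩)
          by_cases hj : ∃ i', ks i' = k
          · simp only [he, dif_pos hj]
            rw [hj.choose_spec]
          · simp only [he, dif_neg hj]
            exact (hcon k (not_exists.mp hj)).symm
        obtain ⟨k, hk1, hk2⟩ := hne
        rw [Finset.prod_eq_zero (Finset.mem_univ k), zero_mul]
        simp only [hw, dif_neg hk1]
        exact if_neg hk2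
      have hinj : ∀ h1 ∈ Finset.univ, ∀ h2 ∈ Finset.univ, e h1 = e h2 → h1 = h2 := by
        intro h1 _ h2 _ h12
        funext i
        have hc := congrFun h12 (ks i)
        have hj : ∃ i', ks i' = ks i := ⟨i, rfl⟩
        simp only [he, dif_pos hj] at hc
        rwa [hchoose i hj] at hc
      calc SDPT.sys w Rs ts
          = ∑ H ∈ Finset.univ.filter (· ∈ Finset.univ.image e),
              (∏ k, w k (H k))
                * ind (∀ k, (ts k).run (fun q => H q.1 q.2) ∈ Rs k (H k)) := by
            rw [SDPT.sys]
            refine (Finset.sum_filter_of_ne fun H _ hne => ?_).symm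
            by_contra hH
            exact hne (hvanish H hH)
        _ = ∑ H ∈ Finset.univ.image e,
              (∏ k, w k (H k))
                * ind (∀ k, (ts k).run (fun q => H q.1 q.2) ∈ Rs k (H k)) := by
            rw [Finset.filter_mem_eq_inter, Finset.univ_inter]
        _ = ∑ h : Fin u → Fin G.M → Fin G.N,
              (∏ k, w k (e h k))
                * ind (∀ k, (ts k).run (fun q => e h q.1 q.2) ∈ Rs k (e h k)) :=
            Finset.sum_image hinj
        _ = _ := by
            refine Finset.sum_congr rfl fun h _ => ?_
            congr 1
            · rw [← Finset.prod_filter_mul_prod_filter_not Finset.univ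
                (fun k => ∃ i', ks i' = k) (fun k => w k (e h k))]
              have h2 : (∏ k ∈ Finset.univ.filter (fun k => ¬ ∃ i', ks i' = k),
                  w k (e h k)) = 1 :=
                Finset.prod_eq_one fun k hk => by
                  have hk' := (Finset.mem_filter.mp hk).2
                  simp only [hw, he, dif_neg hk']
                  simp
              have h1 : Finset.univ.filter (fun k => ∃ i', ks i' = k)
                  = Finset.univ.image ks := by
                ext k
                simp [Finset.mem_filter, Finset.mem_image]
              rw [h1, h2, mul_one, Finset.prod_image (fun i _ i' _ hh => hks hh)]
              refine Finset.prod_congr rfl fun i _ => ?_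
              have hj : ∃ i', ks i' = ks i := ⟨i, rfl⟩
              simp only [hw, he, dif_pos hj, hchoose i hj]
            · refine SDPT.ind_congr ⟨fun hk i => ?_, fun hi k => ?_⟩
              · have hj : ∃ i', ks i' = ks i := ⟨i, rfl⟩
                have h3 := hk (ks i)
                simp only [hts, hRs, he, dif_pos hj, hchoose i hj] at h3
                rwa [SDPT.toTr_run] at h3
              · by_cases hj : ∃ i', ks i' = k
                · obtain ⟨i, rfl⟩ := hj
                  have hj' : ∃ i', ks i' = ks i := ⟨i, rfl⟩
                  have h4 := hi i
                  simp only [hts, hRs, he, dif_pos hj', hchoose i hj']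
                  rw [SDPT.toTr_run]
                  exact h4
                · simp only [hRs, dif_neg hj]
                  exact Set.mem_univ _
    have hdepth : ∀ k, (ts k).depth ≤ (fun _ : Fin K => T) k := by
      intro k
      by_cases hj : ∃ i', ks i' = k
      · simp only [hts, dif_pos hj]
        exact SDPT.toTr_depth _
      · simp only [hts, dif_neg hj]
        simp [SDPT.Tr.depth]
    have hmain := SDPT.sys_le (SDPT.NPcard w) (∑ k, (ts k).size) w Rs
      (fun _ => T) ts le_rfl le_rfl hdepth
    have hlast : (∏ k, SDPT.val (w k) (Rs k) T) ≤ ∏ i, G.condSec (chs i) T := by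
      have h5 : ∀ k, SDPT.val (w k) (Rs k) T ≤
          (if hj : ∃ i', ks i' = k then G.condSec (chs hj.choose) T else 1) := by
        intro k
        by_cases hj : ∃ i', ks i' = k
        · simp only [hw, hRs, dif_pos hj]
          exact SDPT.val_le_condSec G (chs hj.choose) T
        · simp only [hw, hRs, dif_neg hj]
          refine le_trans (SDPT.val_le_mass _ _ _) ?_
          rw [Finset.sum_ite_eq' Finset.univ (f0 k) (fun _ => (1:ℝ≥0∞))]
          simp
      refine le_trans (Finset.prod_le_prod' fun k _ => h5 k) (le_of_eq ?_)
      rw [← Finset.prod_filter_mul_prod_filter_not Finset.univ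
        (fun k => ∃ i', ks i' = k)]
      have h6 : (∏ k ∈ Finset.univ.filter (fun k => ¬ ∃ i', ks i' = k),
          (if hj : ∃ i', ks i' = k then G.condSec (chs hj.choose) T else 1)) = 1 :=
        Finset.prod_eq_one fun k hk => dif_neg (Finset.mem_filter.mp hk).2
      have h1 : Finset.univ.filter (fun k => ∃ i', ks i' = k)
          = Finset.univ.image ks := by
        ext k
        simp [Finset.mem_filter, Finset.mem_image]
      rw [h1, h6, mul_one, Finset.prod_image (fun i _ i' _ hh => hks hh)]
      refine Finset.prod_congr rfl fun i _ => ?_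
      have hj : ∃ i', ks i' = ks i := ⟨i, rfl⟩
      simp only [dif_pos hj, hchoose i hj]
    calc (∑ h : Fin u → Fin G.M → Fin G.N,
            (∏ i, G.condDist (chs i) (h i)) *
              ind (∀ i, (B (ks i, chs i)).run
                  (fun q => (if hj : ∃ i', ks i' = q.1 then h hj.choose else f0 q.1) q.2)
                ∈ G.R (h i) (chs i)))
        = SDPT.sys w Rs ts := hsys.symm
      _ ≤ ∏ k, SDPT.val (w k) (Rs k) ((fun _ : Fin K => T) k) := hmain
      _ ≤ ∏ i, G.condSec (chs i) T := by
          refine le_trans (le_of_eq ?_) hlast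
          rfl
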